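/- Let n ≥ 1, let a < b be reals, and let γ : [a,b] → ℝ^n be a curve with totally positive torsion. Then γ is a convex curve: there do not exist n+1 pairwise distinct parameters t₁, …, t_{n+1} ∈ [a,b] such that the points γ(t₁), …, γ(t_{n+1}) all lie in a single affine hyperplane of ℝ^n. In particular, for every integer 1 ≤ k ≤ n and every (c₀, c₁, …, c_k) ∈ ℝ^{k+1} with (c₀,…,c_k) ≠ (0,…,0), the equation c₀ + c₁γ₁(t) + … + c_kγ_k(t) = 0 has at most k solutions t ∈ [a,b]. -/

import Mathlib

noncomputable section

open Set Filter Topology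

namespace Stmt15Aux

lemma iteratedDerivWithin_of_isOpen' {s : Set ℝ} (hs : IsOpen s) {t : ℝ} (ht : t ∈ s)
    (n : ℕ) (f : ℝ → ℝ) : iteratedDerivWithin n f s t = iteratedDeriv n f t := by
  rw [iteratedDerivWithin_eq_iteratedFDerivWithin, iteratedDeriv_eq_iteratedFDeriv,
    iteratedFDerivWithin_of_isOpen n hs ht]

lemma iteratedDeriv_add_of_contDiffOn {s : Set ℝ} (hs : IsOpen s) {t : ℝ} (ht : t ∈ s)
    {q : ℕ} {f g : ℝ → ℝ} (hf : ContDiffOn ℝ q f s) (hg : ContDiffOn ℝ q g s) :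
    iteratedDeriv q (fun x => f x + g x) t = iteratedDeriv q f t + iteratedDeriv q g t := by
  rw [← iteratedDerivWithin_of_isOpen' hs ht, ← iteratedDerivWithin_of_isOpen' hs ht,
    ← iteratedDerivWithin_of_isOpen' hs ht]
  exact iteratedDerivWithin_add ht hs.uniqueDiffOn (hf.contDiffWithinAt ht) (hg.contDiffWithinAt ht)

lemma iteratedDeriv_const' (r : ℕ) (c : ℝ) (t : ℝ) :
    iteratedDeriv r (fun _ : ℝ => c) t = if r = 0 then c else 0 := by
  induction r generalizing c t with
  | zero => simp [iteratedDeriv_zero]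
  | succ r ih =>
    rw [iteratedDeriv_succ']
    have : deriv (fun _ : ℝ => c) = fun _ : ℝ => (0 : ℝ) := by
      funext x; exact deriv_const x c
    rw [this, ih]
    simp

/-- Leibniz transformation coefficients. -/
def LT (t : ℝ) : ℕ → (ℝ → ℝ) → ℕ → ℝ
  | 0, h, r => if r = 0 then h t else 0
  | (q+1), h, r => LT t q (deriv h) r + (if r = 0 then 0 else LT t q h (r-1))

lemma LT_eq_zero (t : ℝ) : ∀ (q : ℕ) (h : ℝ → ℝ) (r : ℕ), q < r → LT t q h r = 0 := by
  intro q
  induction q with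
  | zero =>
    intro h r hr
    have hr0 : r ≠ 0 := by omega
    rw [show LT t 0 h r = if r = 0 then h t else 0 from rfl, if_neg hr0]
  | succ q ih =>
    intro h r hr
    have hr0 : r ≠ 0 := by omega
    simp only [LT, if_neg hr0]
    rw [ih _ _ (by omega), ih _ _ (by omega)]
    ring

lemma LT_diag (t : ℝ) : ∀ (q : ℕ) (h : ℝ → ℝ), LT t q h q = h t := by
  intro q
  induction q with
  | zero => intro h; simp [LT]
  | succ q ih =>
    intro h
    simp only [LT]
    rw [LT_eq_zero t q (deriv h) (q + 1) (by omega)]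
    simpa using ih h

lemma leibniz {s : Set ℝ} (hs : IsOpen s) {t : ℝ} (ht : t ∈ s) :
    ∀ (q : ℕ) (h u : ℝ → ℝ), ContDiffOn ℝ q h s → ContDiffOn ℝ q u s →
      iteratedDeriv q (fun x => h x * u x) t
        = ∑ r ∈ Finset.range (q + 1), LT t q h r * iteratedDeriv r u t := by
  intro q
  induction q with
  | zero =>
    intro h u _ _
    simp [LT, iteratedDeriv_zero]
  | succ q ih =>
    intro h u hh hu
    have hone : (1 : WithTop ℕ∞) ≤ ((q + 1 : ℕ) : WithTop ℕ∞) := by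
      exact_mod_cast Nat.succ_le_succ (Nat.zero_le q)
    have hdh : ContDiffOn ℝ q (deriv h) s := hh.deriv_of_isOpen hs (by exact_mod_cast le_rfl)
    have hdu : ContDiffOn ℝ q (deriv u) s := hu.deriv_of_isOpen hs (by exact_mod_cast le_rfl)
    have hh' : ContDiffOn ℝ q h s := hh.of_le (by exact_mod_cast Nat.le_succ q)
    have hu' : ContDiffOn ℝ q u s := hu.of_le (by exact_mod_cast Nat.le_succ q)
    have hEq : Set.EqOn (deriv (fun x => h x * u x))
        (fun x => deriv h x * u x + h x * deriv u x) s := by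
      intro x hx
      exact deriv_fun_mul ((hh.differentiableOn (by exact_mod_cast Nat.succ_ne_zero q)).differentiableAt (hs.mem_nhds hx))
        ((hu.differentiableOn (by exact_mod_cast Nat.succ_ne_zero q)).differentiableAt (hs.mem_nhds hx))
    rw [iteratedDeriv_succ', hEq.iteratedDeriv_of_isOpen hs q ht,
      iteratedDeriv_add_of_contDiffOn hs ht (hdh.mul hu') (hh'.mul hdu),
      ih _ _ hdh hu', ih _ _ hh' hdu]
    have hder : ∀ r : ℕ, iteratedDeriv r (deriv u) t = iteratedDeriv (r + 1) u t := by
      intro r; rw [iteratedDeriv_succ']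
    -- RHS decomposition
    have hsplit : ∑ r ∈ Finset.range (q + 2), LT t (q + 1) h r * iteratedDeriv r u t
        = ∑ r ∈ Finset.range (q + 2), LT t q (deriv h) r * iteratedDeriv r u t
          + ∑ r ∈ Finset.range (q + 2),
              (if r = 0 then 0 else LT t q h (r - 1)) * iteratedDeriv r u t := by
      rw [← Finset.sum_add_distrib]
      refine Finset.sum_congr rfl fun r _ => ?_
      show (LT t q (deriv h) r + _) * _ = _
      ring
    rw [hsplit]
    congr 1
    · conv_rhs => rw [Finset.sum_range_succ]
      rw [LT_eq_zero t q (deriv h) (q + 1) (by omega)]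
      simp
    · conv_rhs => rw [Finset.sum_range_succ']
      simp only [Nat.add_sub_cancel, if_neg (Nat.succ_ne_zero _), if_true, zero_mul, add_zero,
        ite_true]
      exact Finset.sum_congr rfl fun r _ => by rw [hder r]


lemma wdet {a b t : ℝ} (ht : t ∈ Ioo a b) (m : ℕ) (g : Fin (m + 1) → ℝ → ℝ)
    (hg : ∀ p, ContDiffOn ℝ m (g p) (Ioo a b)) (h0 : ∀ x ∈ Ioo a b, g 0 x ≠ 0) :
    (Matrix.of fun p q : Fin (m + 1) => iteratedDeriv (q : ℕ) (g p) t).det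
      = (g 0 t) ^ (m + 1) *
        (Matrix.of fun p q : Fin m =>
          iteratedDeriv ((q : ℕ) + 1) (fun x => g p.succ x / g 0 x) t).det := by
  have hopen : IsOpen (Ioo a b) := isOpen_Ioo
  set u : Fin (m + 1) → ℝ → ℝ := fun p x => g p x / g 0 x with hu_def
  have hu : ∀ p, ContDiffOn ℝ m (u p) (Ioo a b) := fun p => (hg p).div (hg 0) h0
  -- entry identity
  have hentry : ∀ p q : Fin (m + 1), iteratedDeriv (q : ℕ) (g p) t
      = ∑ r : Fin (m + 1), iteratedDeriv (r : ℕ) (u p) t * LT t (q : ℕ) (g 0) (r : ℕ) := by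
    intro p q
    have hEq : Set.EqOn (g p) (fun x => g 0 x * u p x) (Ioo a b) := by
      intro x hx
      simp only [hu_def]
      rw [mul_div_cancel₀ _ (h0 x hx)]
    rw [hEq.iteratedDeriv_of_isOpen hopen (q : ℕ) ht,
      leibniz hopen ht (q : ℕ) (g 0) (u p)
        ((hg 0).of_le (by exact_mod_cast q.is_le)) ((hu p).of_le (by exact_mod_cast q.is_le)),
      Fin.sum_univ_eq_sum_range (fun r => iteratedDeriv r (u p) t * LT t (q : ℕ) (g 0) r) (m + 1)]
    refine ((Finset.sum_subset (Finset.range_subset_range.2 (Nat.succ_le_succ q.is_le))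
        (fun r _ hr => ?_)).symm.trans ?_).symm
    · rw [LT_eq_zero t (q : ℕ) (g 0) r (by simp only [Finset.mem_range] at hr; omega), mul_zero]
    · exact Finset.sum_congr rfl fun r _ => (mul_comm _ _)
  set N : Matrix (Fin (m + 1)) (Fin (m + 1)) ℝ :=
    Matrix.of fun p r : Fin (m + 1) => iteratedDeriv (r : ℕ) (u p) t with hN
  set T : Matrix (Fin (m + 1)) (Fin (m + 1)) ℝ :=
    Matrix.of fun q r : Fin (m + 1) => LT t (q : ℕ) (g 0) (r : ℕ) with hT
  have hM : (Matrix.of fun p q : Fin (m + 1) => iteratedDeriv (q : ℕ) (g p) t)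
      = N * T.transpose := by
    ext p q
    rw [Matrix.mul_apply]
    exact hentry p q
  have hTdet : T.det = (g 0 t) ^ (m + 1) := by
    rw [← Matrix.det_transpose]
    rw [Matrix.det_of_upperTriangular (M := T.transpose) ?_]
    · calc ∏ i : Fin (m + 1), T.transpose i i = ∏ _i : Fin (m + 1), g 0 t :=
            Finset.prod_congr rfl (fun i _ => LT_diag t (i : ℕ) (g 0))
        _ = (g 0 t) ^ (m + 1) := by simp [Finset.prod_const]
    · intro i j hij
      exact LT_eq_zero t (j : ℕ) (g 0) (i : ℕ) (by exact_mod_cast hij)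
  have hNrow : ∀ r : Fin (m + 1), N 0 r = if (r : ℕ) = 0 then 1 else 0 := by
    intro r
    have hEq : Set.EqOn (u 0) (fun _ => (1 : ℝ)) (Ioo a b) := by
      intro x hx
      simp only [hu_def]
      rw [div_self (h0 x hx)]
    show iteratedDeriv (r : ℕ) (u 0) t = _
    rw [hEq.iteratedDeriv_of_isOpen hopen (r : ℕ) ht, iteratedDeriv_const']
  have hNdet : N.det = (Matrix.of fun p q : Fin m =>
      iteratedDeriv ((q : ℕ) + 1) (fun x => g p.succ x / g 0 x) t).det := by
    rw [Matrix.det_succ_row_zero]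
    rw [Finset.sum_eq_single 0]
    · rw [hNrow 0]
      simp only [Fin.val_zero, if_pos rfl, if_true, ite_true, pow_zero, one_mul, mul_one, Fin.succAbove_zero]
      refine congrArg (Matrix.det (n := Fin m) (R := ℝ)) ?_
      ext p q
      show iteratedDeriv ((q.succ : Fin (m + 1)) : ℕ) (u p.succ) t = _
      rw [Fin.val_succ]
      rfl
    · intro j _ hj
      have hj' : (j : ℕ) ≠ 0 := fun h => hj (Fin.ext (by simp [h]))
      rw [hNrow j, if_neg hj']
      ring
    · intro h; exact absurd (Finset.mem_univ 0) h
  rw [hM, Matrix.det_mul, Matrix.det_transpose, hTdet, hNdet]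
  ring


lemma rolle_tuple {f : ℝ → ℝ} {S : Set ℝ} (hf : ContinuousOn f S) {m : ℕ}
    {t : Fin (m + 1) → ℝ} (ht : StrictMono t)
    (hsub : Icc (t 0) (t (Fin.last m)) ⊆ S)
    (hz : ∀ i, f (t i) = 0) :
    ∃ s : Fin m → ℝ, StrictMono s ∧ (∀ i, s i ∈ Ioo (t i.castSucc) (t i.succ)) ∧
      ∀ i, deriv f (s i) = 0 := by
  have H : ∀ i : Fin m, ∃ x ∈ Ioo (t i.castSucc) (t i.succ), deriv f x = 0 := by
    intro i
    refine exists_deriv_eq_zero (ht (Fin.castSucc_lt_succ (i := i))) (hf.mono ?_) (by rw [hz, hz])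
    refine subset_trans (Icc_subset_Icc ?_ ?_) hsub
    · exact ht.monotone (Fin.zero_le _)
    · exact ht.monotone (Fin.le_last _)
  choose s hs1 hs2 using H
  refine ⟨s, fun i j hij => ?_, hs1, hs2⟩
  exact lt_trans (hs1 i).2 (lt_of_le_of_lt
    (ht.monotone (Fin.succ_le_castSucc_iff.mpr hij)) (hs1 j).1)

lemma cheb (a b : ℝ) : ∀ (k : ℕ) (g : Fin k → ℝ → ℝ),
    (∀ i, ContDiffOn ℝ (k - 1 : ℕ) (g i) (Ioo a b)) →
    (∀ t ∈ Ioo a b, ∀ (m : ℕ) (hm : m + 1 ≤ k),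
       0 < (Matrix.of fun p q : Fin (m + 1) =>
          iteratedDeriv (q : ℕ) (g (Fin.castLE hm p)) t).det) →
    ∀ c : Fin k → ℝ, c ≠ 0 →
      ¬∃ t : Fin k → ℝ, StrictMono t ∧ (∀ i, t i ∈ Ioo a b) ∧
          ∀ i, ∑ j, c j * g j (t i) = 0 := by
  intro k
  induction k with
  | zero =>
    intro g _ _ c hc _
    exact hc (Subsingleton.elim _ _)
  | succ k ih =>
    intro g hg hW c hc hex
    obtain ⟨t, htm, htI, htz⟩ := hex
    have hopen : IsOpen (Ioo a b) := isOpen_Ioo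
    -- positivity of g 0 on Ioo a b
    have hg0pos : ∀ x ∈ Ioo a b, 0 < g 0 x := by
      intro x hx
      have h1 := hW x hx 0 (Nat.succ_le_succ (Nat.zero_le k))
      rw [show (Matrix.of fun p q : Fin 1 =>
          iteratedDeriv (q : ℕ) (g (Fin.castLE (Nat.succ_le_succ (Nat.zero_le k)) p)) x).det
          = iteratedDeriv 0 (g (Fin.castLE (Nat.succ_le_succ (Nat.zero_le k)) 0)) x
          from Matrix.det_fin_one _] at h1
      rw [iteratedDeriv_zero] at h1
      rwa [show Fin.castLE (Nat.succ_le_succ (Nat.zero_le k)) (0 : Fin 1) = 0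
        from Fin.ext (by simp)] at h1
    have hg0ne : ∀ x ∈ Ioo a b, g 0 x ≠ 0 := fun x hx => (hg0pos x hx).ne'
    by_cases hcs : ∀ j : Fin k, c j.succ = 0
    · -- then c 0 ≠ 0 and already one zero gives contradiction
      have hc0 : c 0 ≠ 0 := by
        intro h0
        apply hc
        funext i
        refine Fin.cases h0 (fun j => hcs j) i
      have := htz 0
      rw [Fin.sum_univ_succ] at this
      rw [Finset.sum_eq_zero (fun j _ => by rw [hcs j, zero_mul])] at this
      have hgt0 := hg0pos (t 0) (htI 0)
      rw [add_zero] at this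
      rcases mul_eq_zero.mp this with h | h
      · exact hc0 h
      · exact hgt0.ne' h
    · push_neg at hcs
      obtain ⟨j0, hj0⟩ := hcs
      have hk1 : 1 ≤ k := Nat.pos_of_ne_zero (by rintro rfl; exact j0.elim0)
      -- quotient functions
      set u : Fin k → ℝ → ℝ := fun j x => g j.succ x / g 0 x with hu_def
      have hgk : ∀ p : Fin (k + 1), ContDiffOn ℝ (k : ℕ) (g p) (Ioo a b) := by
        intro p
        have := hg p
        simpa using this
      have hu : ∀ j, ContDiffOn ℝ (k : ℕ) (u j) (Ioo a b) :=
        fun j => (hgk j.succ).div (hgk 0) hg0ne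
      set G : Fin k → ℝ → ℝ := fun j => deriv (u j) with hG_def
      have hGsmooth : ∀ j, ContDiffOn ℝ (k - 1 : ℕ) (G j) (Ioo a b) := by
        intro j
        refine (hu j).deriv_of_isOpen hopen ?_
        have : (k - 1 : ℕ) + 1 = k := Nat.succ_pred_eq_of_pos hk1
        exact_mod_cast this.le
      -- Wronskian positivity for G
      have hWG : ∀ x ∈ Ioo a b, ∀ (m : ℕ) (hm : m + 1 ≤ k),
          0 < (Matrix.of fun p q : Fin (m + 1) =>
            iteratedDeriv (q : ℕ) (G (Fin.castLE hm p)) x).det := by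
        intro x hx m hm
        have hm' : m + 1 + 1 ≤ k + 1 := Nat.succ_le_succ hm
        have h00 : Fin.castLE hm' (0 : Fin (m + 1 + 1)) = 0 := Fin.ext (by simp)
        have hwd := wdet hx (m + 1) (fun p => g (Fin.castLE hm' p))
          (fun p => (hgk _).of_le (by exact_mod_cast Nat.le_of_succ_le_succ hm'))
          (fun x hx => by simpa [h00] using hg0ne x hx)
        have hWpos := hW x hx (m + 1) hm'
        rw [hwd] at hWpos
        rw [h00] at hWpos
        have hpow : 0 < (g 0 x) ^ (m + 1 + 1) := pow_pos (hg0pos x hx) _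
        have hmatch : (Matrix.of fun p q : Fin (m + 1) =>
              iteratedDeriv ((q : ℕ) + 1) (fun y => g (Fin.castLE hm' p.succ) y / g 0 y) x)
            = (Matrix.of fun p q : Fin (m + 1) =>
              iteratedDeriv (q : ℕ) (G (Fin.castLE hm p)) x) := by
          ext p q
          show iteratedDeriv ((q : ℕ) + 1) (fun y => g (Fin.castLE hm' p.succ) y / g 0 y) x
            = iteratedDeriv (q : ℕ) (deriv (u (Fin.castLE hm p))) x
          rw [iteratedDeriv_succ']
          have hps : (fun y => g (Fin.castLE hm' p.succ) y / g 0 y) = u (Fin.castLE hm p) := by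
            funext y
            have h1 : Fin.castLE hm' p.succ = (Fin.castLE hm p).succ := Fin.ext (by simp)
            rw [h1]
          rw [hps]
        rw [hmatch] at hWpos
        rcases mul_pos_iff.mp hWpos with ⟨_, h⟩ | ⟨h, _⟩
        · exact h
        · exact absurd hpow (by linarith)
      -- the quotient function φ and its zeros
      set φ : ℝ → ℝ := fun x => (∑ j, c j * g j x) / g 0 x with hφ_def
      have hφz : ∀ i, φ (t i) = 0 := by
        intro i
        rw [hφ_def]
        simp only
        rw [htz i, zero_div]
      have hnum : ContDiffOn ℝ (k : ℕ) (fun x => ∑ j, c j * g j x) (Ioo a b) := by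
        apply ContDiffOn.sum
        intro j _
        exact (contDiffOn_const).mul (hgk j)
      have hφsm : ContDiffOn ℝ (k : ℕ) φ (Ioo a b) := hnum.div (hgk 0) hg0ne
      have hIccsub : Icc (t 0) (t (Fin.last k)) ⊆ Ioo a b := by
        intro x hx
        obtain ⟨h1, h2⟩ := htI 0
        obtain ⟨h3, h4⟩ := htI (Fin.last k)
        exact ⟨lt_of_lt_of_le h1 hx.1, lt_of_le_of_lt hx.2 h4⟩
      obtain ⟨s, hsm, hsio, hsz⟩ := rolle_tuple (hφsm.continuousOn) htm hIccsub hφz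
      have hsI : ∀ i, s i ∈ Ioo a b := by
        intro i
        obtain ⟨h1, h2⟩ := hsio i
        exact ⟨lt_trans (htI i.castSucc).1 h1, lt_trans h2 (htI i.succ).2⟩
      -- identify deriv φ with the combination of G
      have hEqφ : Set.EqOn φ (fun x => c 0 + ∑ j : Fin k, c j.succ * u j x) (Ioo a b) := by
        intro x hx
        have hx0 := hg0ne x hx
        show (∑ j : Fin (k + 1), c j * g j x) / g 0 x = c 0 + ∑ j : Fin k, c j.succ * u j x
        rw [Fin.sum_univ_succ, div_eq_iff hx0, add_mul, Finset.sum_mul]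
        congr 1
        refine Finset.sum_congr rfl fun j _ => ?_
        show c j.succ * g j.succ x = c j.succ * (g j.succ x / g 0 x) * g 0 x
        rw [mul_assoc, div_mul_cancel₀ _ hx0]
      have hGz : ∀ i, ∑ j, c j.succ * G j (s i) = 0 := by
        intro i
        rw [← hsz i]
        have hev : φ =ᶠ[nhds (s i)] (fun x => c 0 + ∑ j : Fin k, c j.succ * u j x) :=
          hEqφ.eventuallyEq_of_mem (hopen.mem_nhds (hsI i))
        rw [hev.deriv_eq]
        have hdiff : ∀ j : Fin k, DifferentiableAt ℝ (u j) (s i) := by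
          intro j
          refine ((hu j).differentiableOn ?_).differentiableAt (hopen.mem_nhds (hsI i))
          exact_mod_cast Nat.one_le_iff_ne_zero.mp hk1
        rw [deriv_const_add]
        rw [deriv_fun_sum (fun j _ => ((hdiff j).const_mul (c j.succ)))]
        exact (Finset.sum_congr rfl fun j _ => (deriv_const_mul (c j.succ) (hdiff j))).symm
      -- apply the induction hypothesis
      have hc' : (fun j : Fin k => c j.succ) ≠ 0 := by
        intro h
        exact hj0 (congrFun h j0)
      exact ih G hGsmooth hWG _ hc' ⟨s, hsm, hsI, hGz⟩


lemma coord {n : ℕ} {a b t : ℝ} (ht : t ∈ Ioo a b) {γ : ℝ → Fin n → ℝ}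
    (hγ : ContDiffOn ℝ n γ (Ioo a b)) {m : ℕ} (hm : m ≤ n) (i : Fin n) :
    iteratedDerivWithin m γ (Ioo a b) t i = iteratedDeriv m (fun x => γ x i) t := by
  have hopen : IsOpen (Ioo a b) := isOpen_Ioo
  have h1 : iteratedDerivWithin m γ (Ioo a b) t i
      = (iteratedFDerivWithin ℝ m γ (Ioo a b) t fun _ => 1) i := by
    rw [iteratedDerivWithin_eq_iteratedFDerivWithin]
  rw [h1]
  have h2 := (ContinuousLinearMap.proj (R := ℝ) (φ := fun _ : Fin n => ℝ)
      i).iteratedFDerivWithin_comp_left (hγ.contDiffWithinAt ht) hopen.uniqueDiffOn ht (by exact_mod_cast hm)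
  have h3 : (iteratedFDerivWithin ℝ m
      ((ContinuousLinearMap.proj (R := ℝ) (φ := fun _ : Fin n => ℝ) i) ∘ γ) (Ioo a b) t
        fun _ => 1)
      = (iteratedFDerivWithin ℝ m γ (Ioo a b) t fun _ => 1) i := by
    rw [h2]; rfl
  rw [← h3]
  have h4 : (ContinuousLinearMap.proj (R := ℝ) (φ := fun _ : Fin n => ℝ) i) ∘ γ
      = fun x => γ x i := rfl
  rw [h4, ← iteratedDerivWithin_eq_iteratedFDerivWithin,
    iteratedDerivWithin_of_isOpen' hopen ht]

end Stmt15Aux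

open Stmt15Aux

/-- Totally positive torsion. -/
def HasTotallyPositiveTorsion (d : ℕ) (a b : ℝ) (γ : ℝ → Fin d → ℝ) : Prop :=
  ContinuousOn γ (Set.Icc a b) ∧
  ContDiffOn ℝ d γ (Set.Ioo a b) ∧
  ∀ t ∈ Set.Ioo a b, ∀ (k : ℕ) (hk : k ≤ d), 1 ≤ k →
    0 < (Matrix.of (fun i j : Fin k =>
      iteratedDerivWithin (j.1 + 1) γ (Set.Ioo a b) t (Fin.castLE hk i))).det

theorem stmt15 (n : ℕ) (hn : 1 ≤ n) (a b : ℝ) (hab : a < b)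
    (γ : ℝ → Fin n → ℝ) (hγ : HasTotallyPositiveTorsion n a b γ) :
    (¬∃ t : Fin (n + 1) → ℝ, Function.Injective t ∧ (∀ i, t i ∈ Set.Icc a b) ∧
        ∃ (c : Fin n → ℝ) (c₀ : ℝ), c ≠ 0 ∧ ∀ i, ∑ j, c j * γ (t i) j = c₀) ∧
    (∀ (k : ℕ), 1 ≤ k → ∀ (hkn : k ≤ n), ∀ c : Fin (k + 1) → ℝ, c ≠ 0 →
        {t ∈ Set.Icc a b |
          c 0 + ∑ j : Fin k, c j.succ * γ t (Fin.castLE hkn j) = 0}.encard ≤ (k : ℕ∞)) := by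

  obtain ⟨hcont, hsmooth, hpos⟩ := hγ
  have hopen : IsOpen (Ioo a b) := isOpen_Ioo
  -- coordinate functions
  set P : Fin n → ℝ → ℝ := fun i x => γ x i with hP_def
  have hPsm : ∀ i, ContDiffOn ℝ (n : ℕ) (P i) (Ioo a b) := fun i =>
    (ContinuousLinearMap.proj (R := ℝ) (φ := fun _ : Fin n => ℝ) i).contDiff.comp_contDiffOn
      hsmooth
  have hPcont : ∀ i, ContinuousOn (P i) (Icc a b) := fun i =>
    (continuous_apply i).comp_continuousOn hcont
  -- Part 2
  have P2 : ∀ (k : ℕ), 1 ≤ k → ∀ (hkn : k ≤ n), ∀ c : Fin (k + 1) → ℝ, c ≠ 0 →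
      {t ∈ Set.Icc a b |
        c 0 + ∑ j : Fin k, c j.succ * γ t (Fin.castLE hkn j) = 0}.encard ≤ (k : ℕ∞) := by
    intro k hk hkn c hc
    set F : ℝ → ℝ := fun x => c 0 + ∑ j : Fin k, c j.succ * P (Fin.castLE hkn j) x with hF_def
    set S : Set ℝ := {t ∈ Set.Icc a b |
      c 0 + ∑ j : Fin k, c j.succ * γ t (Fin.castLE hkn j) = 0} with hS_def
    show S.encard ≤ (k : ℕ∞)
    by_cases hcs : ∀ j : Fin k, c j.succ = 0
    · have hc0 : c 0 ≠ 0 := by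
        intro h0
        apply hc
        funext i
        exact Fin.cases h0 (fun j => hcs j) i
      have hSempty : S = ∅ := by
        ext x
        simp only [hS_def, mem_setOf_eq, mem_empty_iff_false, iff_false, not_and]
        intro _ h
        apply hc0
        rwa [Finset.sum_eq_zero (fun j _ => by rw [hcs j, zero_mul]), add_zero] at h
      rw [hSempty, Set.encard_empty]
      exact zero_le
    · push_neg at hcs
      obtain ⟨j0, hj0⟩ := hcs
      by_contra hcard
      -- extract k+1 strictly increasing zeros
      have hk1 : ((k : ℕ∞) + 1) ≤ S.encard :=
        (ENat.add_one_le_iff (by simp)).mpr (lt_of_not_ge hcard)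
      have hk1' : (((k + 1 : ℕ)) : ℕ∞) ≤ S.encard := by exact_mod_cast hk1
      obtain ⟨T, hTS, hTcard⟩ := Set.exists_subset_encard_eq hk1'
      have hTfin : T.Finite := Set.finite_of_encard_eq_coe hTcard
      have hTc : hTfin.toFinset.card = k + 1 := by
        have := hTfin.encard_eq_coe_toFinset_card
        rw [hTcard] at this
        exact_mod_cast this.symm
      set e := hTfin.toFinset.orderIsoOfFin hTc with he_def
      set t : Fin (k + 1) → ℝ := fun i => (e i : ℝ) with ht_def
      have htm : StrictMono t := fun i j hij => by
        have := e.strictMono hij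
        exact_mod_cast this
      have htS : ∀ i, t i ∈ S := fun i => hTS (hTfin.mem_toFinset.mp (e i).2)
      have htIcc : ∀ i, t i ∈ Icc a b := fun i => (htS i).1
      have htz : ∀ i, F (t i) = 0 := fun i => (htS i).2
      -- Rolle
      have hFcont : ContinuousOn F (Icc a b) := by
        refine continuousOn_const.add ?_
        exact continuousOn_finset_sum _ fun j _ => continuousOn_const.mul (hPcont _)
      obtain ⟨s, hsm, hsio, hsz⟩ := rolle_tuple hFcont htm
        (Icc_subset_Icc (htIcc 0).1 (htIcc (Fin.last k)).2) htz
      have hsI : ∀ i, s i ∈ Ioo a b := by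
        intro i
        obtain ⟨h1, h2⟩ := hsio i
        exact ⟨lt_of_le_of_lt (htIcc i.castSucc).1 h1, lt_of_lt_of_le h2 (htIcc i.succ).2⟩
      -- the derivative system
      set g : Fin k → ℝ → ℝ := fun j => deriv (P (Fin.castLE hkn j)) with hg_def
      have hgsm : ∀ j, ContDiffOn ℝ (k - 1 : ℕ) (g j) (Ioo a b) := by
        intro j
        refine (hPsm _).deriv_of_isOpen hopen ?_
        exact_mod_cast (show (k - 1) + 1 ≤ n by omega)
      have hWcheb : ∀ x ∈ Ioo a b, ∀ (m : ℕ) (hm : m + 1 ≤ k),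
          0 < (Matrix.of fun p q : Fin (m + 1) =>
            iteratedDeriv (q : ℕ) (g (Fin.castLE hm p)) x).det := by
        intro x hx m hm
        have hm1n : m + 1 ≤ n := le_trans hm hkn
        have h := hpos x hx (m + 1) hm1n (Nat.succ_le_succ (Nat.zero_le m))
        have hmat : (Matrix.of fun p q : Fin (m + 1) =>
              iteratedDeriv (q : ℕ) (g (Fin.castLE hm p)) x)
            = Matrix.of fun p q : Fin (m + 1) =>
              iteratedDerivWithin ((q : ℕ) + 1) γ (Ioo a b) x (Fin.castLE hm1n p) := by
          ext p q
          show iteratedDeriv (q : ℕ) (deriv (P (Fin.castLE hkn (Fin.castLE hm p)))) x = _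
          rw [← iteratedDeriv_succ']
          have hj : Fin.castLE hkn (Fin.castLE hm p) = Fin.castLE hm1n p := Fin.ext (by simp)
          rw [hj, ← coord hx hsmooth (by omega) (Fin.castLE hm1n p)]
          rfl
        rw [hmat]
        exact h
      have hc' : (fun j : Fin k => c j.succ) ≠ 0 := fun h => hj0 (congrFun h j0)
      refine cheb a b k g hgsm hWcheb _ hc' ⟨s, hsm, hsI, ?_⟩
      intro i
      rw [← hsz i]
      have hdiff : ∀ j : Fin k, DifferentiableAt ℝ (P (Fin.castLE hkn j)) (s i) := by
        intro j
        refine ((hPsm _).differentiableOn ?_).differentiableAt (hopen.mem_nhds (hsI i))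
        exact_mod_cast Nat.one_le_iff_ne_zero.mp hn
      rw [hF_def]
      rw [show (fun x => c 0 + ∑ j : Fin k, c j.succ * P (Fin.castLE hkn j) x)
          = fun x => c 0 + (fun y => ∑ j : Fin k, c j.succ * P (Fin.castLE hkn j) y) x from rfl]
      rw [deriv_const_add]
      rw [deriv_fun_sum (fun j _ => ((hdiff j).const_mul (c j.succ)))]
      exact (Finset.sum_congr rfl fun j _ => (deriv_const_mul (c j.succ) (hdiff j))).symm
  refine ⟨?_, P2⟩
  rintro ⟨t, htinj, htIcc, c, c₀, hc, hci⟩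
  set c' : Fin (n + 1) → ℝ := Fin.cons (-c₀) c with hc'_def
  have hc'ne : c' ≠ 0 := by
    intro h
    apply hc
    funext j
    have := congrFun h j.succ
    rwa [hc'_def, Fin.cons_succ] at this
  have hcard := P2 n hn le_rfl c' hc'ne
  set S : Set ℝ := {x ∈ Set.Icc a b |
    c' 0 + ∑ j : Fin n, c' j.succ * γ x (Fin.castLE le_rfl j) = 0} with hS_def
  have hrange : Set.range t ⊆ S := by
    rintro _ ⟨i, rfl⟩
    refine ⟨htIcc i, ?_⟩
    rw [hc'_def]
    simp only [Fin.cons_zero, Fin.cons_succ]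
    have hcast : ∀ j : Fin n, Fin.castLE le_rfl j = j := fun j => Fin.ext (by simp)
    rw [show (∑ j : Fin n, c j * γ (t i) (Fin.castLE le_rfl j))
        = ∑ j : Fin n, c j * γ (t i) j from Finset.sum_congr rfl fun j _ => by rw [hcast j]]
    rw [hci i]
    ring
  have h1 : ((n + 1 : ℕ) : ℕ∞) ≤ S.encard := by
    have hr : (Set.range t).encard = ((n + 1 : ℕ) : ℕ∞) := by
      rw [← Set.image_univ, Set.InjOn.encard_image htinj.injOn, Set.encard_univ]
      simp [ENat.card_eq_coe_fintype_card]
    calc ((n + 1 : ℕ) : ℕ∞) = (Set.range t).encard := hr.symm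
      _ ≤ S.encard := Set.encard_mono hrange
  have h2 : ((n + 1 : ℕ) : ℕ∞) ≤ (n : ℕ∞) := le_trans h1 hcard
  exact absurd (by exact_mod_cast h2) (Nat.not_succ_le_self n)


end
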